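/- arXiv:0903.4815 — 7 statements merged into one kernel-verified Lean document; each statement's English description precedes it below -/
import Mathlib

section
/- Let Δ = Δ(P,Q,R) be the triangle spanned by P = (a,p), Q = (b,q) with b > a and q ≥ p, and R = (b,r) with r > q. Let ρ = √((b−a)² + (r−p)²) be the length of PR, let ψ = arctan((q−p)/(b−a)) and λ = arctan((r−p)/(b−a)). Let Γ be a convex curve of arc length ρ connecting P to a point N = (n,s), such that all tangent vectors along Γ (including one-sided half-tangents at the endpoints) have angles in [ψ, λ]. Then n ≥ b, with equality only if N = R; if N ≠ R then n > b and Γ intersects the vertical segment from Q to R at a point (b,m) with q ≤ m < r; moreover s ∈ [p + ((q−p)/(b−a))·(n−a), r]. -/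
open Set intervalIntegral Real

set_option maxHeartbeats 1000000 in
/-- The triangle lemma (Lemma on convex curves inside a right/obtuse triangle):
a convex curve of arc length `ρ` starting at `P` whose tangent angles stay in `[ψ, λ]`
reaches abscissa at least `b`, with equality only at `R`, crosses the vertical side,
and its endpoint lies in the stated region. -/
theorem convex_curve_triangle_lemma
    (a p b q r : ℝ) (hab : a < b) (hpq : p ≤ q) (hqr : q < r)
    (ρ ψ lam : ℝ)
    (hρ : ρ = Real.sqrt ((b - a) ^ 2 + (r - p) ^ 2))
    (hψ : ψ = Real.arctan ((q - p) / (b - a)))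
    (hlam : lam = Real.arctan ((r - p) / (b - a)))
    (α : ℝ → ℝ) (hmono : MonotoneOn α (Icc 0 ρ))
    (hrange : ∀ σ ∈ Icc (0:ℝ) ρ, α σ ∈ Icc ψ lam)
    (γ : ℝ → ℝ × ℝ)
    (hγ : ∀ σ : ℝ, γ σ =
      (a + ∫ u in (0:ℝ)..σ, Real.cos (α u), p + ∫ u in (0:ℝ)..σ, Real.sin (α u)))
    (n s : ℝ) (hN : γ ρ = (n, s)) :
    b ≤ n ∧
    (n = b → (n, s) = (b, r)) ∧
    ((n, s) ≠ (b, r) → b < n ∧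
      ∃ σ ∈ Icc (0:ℝ) ρ, ∃ m : ℝ, γ σ = (b, m) ∧ q ≤ m ∧ m < r) ∧
    s ∈ Icc (p + (q - p) / (b - a) * (n - a)) r := by
  have hd : (0:ℝ) < b - a := by linarith
  set t1 : ℝ := (q - p) / (b - a) with ht1
  set t2 : ℝ := (r - p) / (b - a) with ht2
  have ht1nn : 0 ≤ t1 := div_nonneg (by linarith) hd.le
  have ht2pos : 0 < t2 := div_pos (by linarith) hd
  have ht12 : t1 ≤ t2 := by
    rw [ht1, ht2]; exact (div_le_div_iff_of_pos_right hd).2 (by linarith)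
  set S : ℝ := Real.sqrt (1 + t2 ^ 2) with hS
  have hSpos : 0 < S := Real.sqrt_pos.2 (by positivity)
  have hrp : r - p = (b - a) * t2 := by rw [ht2, mul_div_assoc', mul_comm, mul_div_assoc, div_self hd.ne', mul_one]
  have hρ' : ρ = (b - a) * S := by
    rw [hρ, hrp, hS]
    rw [show (b - a) ^ 2 + ((b - a) * t2) ^ 2 = (b - a) ^ 2 * (1 + t2 ^ 2) by ring]
    rw [Real.sqrt_mul (by positivity), Real.sqrt_sq hd.le]
  have hρpos : 0 < ρ := by rw [hρ']; positivity
  have hcoslam : Real.cos lam = 1 / S := by rw [hlam, Real.cos_arctan]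
  have hsinlam : Real.sin lam = t2 / S := by rw [hlam, Real.sin_arctan]
  have hρc : ρ * Real.cos lam = b - a := by
    rw [hρ', hcoslam]; field_simp
  have hρs : ρ * Real.sin lam = r - p := by
    rw [hρ', hsinlam, hrp]; field_simp
  clear_value S
  have hψ0 : 0 ≤ ψ := by
    rw [hψ, ← Real.arctan_zero]
    exact Real.arctan_strictMono.monotone ht1nn
  have hψlam : ψ ≤ lam := by
    rw [hψ, hlam]; exact Real.arctan_strictMono.monotone ht12
  have hlam2 : lam < π / 2 := hlam ▸ Real.arctan_lt_pi_div_two _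
  have hlam0 : 0 < lam := by
    rw [hlam, ← Real.arctan_zero]
    exact Real.arctan_strictMono ht2pos
  have hpi : lam ≤ π := by linarith [Real.pi_pos]
  -- pointwise facts
  have hα0 : ∀ u ∈ Icc (0:ℝ) ρ, 0 ≤ α u := fun u hu => le_trans hψ0 (hrange u hu).1
  have hαlam : ∀ u ∈ Icc (0:ℝ) ρ, α u ≤ lam := fun u hu => (hrange u hu).2
  have hcos_lb : ∀ u ∈ Icc (0:ℝ) ρ, Real.cos lam ≤ Real.cos (α u) := fun u hu =>
    Real.cos_le_cos_of_nonneg_of_le_pi (hα0 u hu) hpi (hαlam u hu)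
  have hsin_lb : ∀ u ∈ Icc (0:ℝ) ρ, 0 ≤ Real.sin (α u) := fun u hu =>
    Real.sin_nonneg_of_nonneg_of_le_pi (hα0 u hu) (le_trans (hαlam u hu) hpi)
  have hsin_ub : ∀ u ∈ Icc (0:ℝ) ρ, Real.sin (α u) ≤ Real.sin lam := fun u hu =>
    Real.sin_le_sin_of_le_of_le_pi_div_two (by linarith [hα0 u hu, Real.pi_pos])
      hlam2.le (hαlam u hu)
  have hcψ : 0 < Real.cos ψ := hψ ▸ Real.cos_arctan_pos _
  have ht1ψ : t1 = Real.sin ψ / Real.cos ψ := by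
    rw [← Real.tan_eq_sin_div_cos, hψ, Real.tan_arctan]
  have htanb : ∀ u ∈ Icc (0:ℝ) ρ, t1 * Real.cos (α u) ≤ Real.sin (α u) := by
    intro u hu
    have h1 : 0 ≤ Real.sin (α u - ψ) :=
      Real.sin_nonneg_of_nonneg_of_le_pi (by linarith [(hrange u hu).1])
        (by linarith [hαlam u hu, hψ0])
    rw [Real.sin_sub] at h1
    rw [ht1ψ, div_mul_eq_mul_div, div_le_iff₀ hcψ]
    nlinarith
  -- the key convexity inequality
  set K : ℝ := Real.cos (lam / 2) / Real.sin (lam / 2) with hK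
  clear_value K
  have hs2 : 0 < Real.sin (lam / 2) :=
    Real.sin_pos_of_pos_of_lt_pi (by linarith) (by linarith [Real.pi_pos])
  have hkey : ∀ u ∈ Icc (0:ℝ) ρ,
      Real.sin lam - Real.sin (α u) ≤ K * (Real.cos (α u) - Real.cos lam) := by
    intro u hu
    have habs : |α u - lam / 2| ≤ lam / 2 :=
      abs_le.2 ⟨by linarith [hα0 u hu], by linarith [hαlam u hu]⟩
    have h1 : Real.cos (lam / 2) ≤ Real.cos (α u - lam / 2) := by
      rw [← Real.cos_abs (α u - lam / 2)]
      exact Real.cos_le_cos_of_nonneg_of_le_pi (abs_nonneg _) (by linarith) habs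
    have h2 := Real.cos_sub (α u) (lam / 2)
    have h3 := Real.cos_sub lam (lam / 2)
    rw [show lam - lam / 2 = lam / 2 by ring] at h3
    rw [hK, div_mul_eq_mul_div, le_div_iff₀ hs2]
    nlinarith
  -- monotonicity / integrability
  have hanti : AntitoneOn (fun u => Real.cos (α u)) (Icc 0 ρ) := by
    intro x hx y hy hxy
    exact Real.cos_le_cos_of_nonneg_of_le_pi (hα0 x hx)
      (le_trans (hαlam y hy) hpi) (hmono hx hy hxy)
  have hmons : MonotoneOn (fun u => Real.sin (α u)) (Icc 0 ρ) := by
    intro x hx y hy hxy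
    exact Real.sin_le_sin_of_le_of_le_pi_div_two
      (by linarith [hα0 x hx, Real.pi_pos]) (le_trans (hαlam y hy) hlam2.le)
      (hmono hx hy hxy)
  have hIcos : ∀ σ ∈ Icc (0:ℝ) ρ,
      IntervalIntegrable (fun u => Real.cos (α u)) MeasureTheory.volume 0 σ := by
    intro σ hσ
    refine (hanti.mono ?_).intervalIntegrable
    rw [uIcc_of_le hσ.1]; exact Icc_subset_Icc le_rfl hσ.2
  have hIsin : ∀ σ ∈ Icc (0:ℝ) ρ,
      IntervalIntegrable (fun u => Real.sin (α u)) MeasureTheory.volume 0 σ := by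
    intro σ hσ
    refine (hmons.mono ?_).intervalIntegrable
    rw [uIcc_of_le hσ.1]; exact Icc_subset_Icc le_rfl hσ.2
  have hsub : ∀ σ ∈ Icc (0:ℝ) ρ, Icc (0:ℝ) σ ⊆ Icc (0:ℝ) ρ := by
    intro σ hσ; exact Icc_subset_Icc le_rfl hσ.2
  -- integral bounds
  have B1 : ∀ σ ∈ Icc (0:ℝ) ρ, σ * Real.cos lam ≤ ∫ u in (0:ℝ)..σ, Real.cos (α u) := by
    intro σ hσ
    have := intervalIntegral.integral_mono_on (μ := MeasureTheory.volume) hσ.1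
      intervalIntegrable_const (hIcos σ hσ)
      (fun x hx => hcos_lb x (hsub σ hσ hx))
    simpa using this
  have B4 : ∀ σ ∈ Icc (0:ℝ) ρ, (∫ u in (0:ℝ)..σ, Real.sin (α u)) ≤ σ * Real.sin lam := by
    intro σ hσ
    have := intervalIntegral.integral_mono_on (μ := MeasureTheory.volume) hσ.1
      (hIsin σ hσ) intervalIntegrable_const
      (fun x hx => hsin_ub x (hsub σ hσ hx))
    simpa using this
  have B5 : ∀ σ ∈ Icc (0:ℝ) ρ,
      t1 * ∫ u in (0:ℝ)..σ, Real.cos (α u) ≤ ∫ u in (0:ℝ)..σ, Real.sin (α u) := by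
    intro σ hσ
    have := intervalIntegral.integral_mono_on (μ := MeasureTheory.volume) hσ.1
      ((hIcos σ hσ).const_mul t1) (hIsin σ hσ)
      (fun x hx => htanb x (hsub σ hσ hx))
    rwa [intervalIntegral.integral_const_mul] at this
  have B6 : ρ * Real.sin lam - (∫ u in (0:ℝ)..ρ, Real.sin (α u)) ≤
      K * ((∫ u in (0:ℝ)..ρ, Real.cos (α u)) - ρ * Real.cos lam) := by
    have hρI : ρ ∈ Icc (0:ℝ) ρ := ⟨hρpos.le, le_rfl⟩
    have := intervalIntegral.integral_mono_on (μ := MeasureTheory.volume) hρpos.le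
      (intervalIntegrable_const.sub (hIsin ρ hρI))
      (((hIcos ρ hρI).sub intervalIntegrable_const).const_mul K)
      (fun x hx => hkey x (hsub ρ hρI hx))
    rwa [intervalIntegral.integral_sub intervalIntegrable_const (hIsin ρ hρI),
      intervalIntegral.integral_const_mul,
      intervalIntegral.integral_sub (hIcos ρ hρI) intervalIntegrable_const,
      intervalIntegral.integral_const, intervalIntegral.integral_const,
      sub_zero, smul_eq_mul, smul_eq_mul] at this
  -- endpoint coordinates
  have hend := (hγ ρ).symm.trans hN
  rw [Prod.mk.injEq] at hend
  obtain ⟨hn, hs⟩ := hend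
  have hρI : ρ ∈ Icc (0:ℝ) ρ := ⟨hρpos.le, le_rfl⟩
  have hXρ : b - a ≤ ∫ u in (0:ℝ)..ρ, Real.cos (α u) := hρc ▸ B1 ρ hρI
  have part1 : b ≤ n := by linarith [hXρ]
  have part4u : s ≤ r := by
    have := B4 ρ hρI
    rw [hρs] at this; linarith
  have part4l : p + t1 * (n - a) ≤ s := by
    have := B5 ρ hρI
    have hX : (∫ u in (0:ℝ)..ρ, Real.cos (α u)) = n - a := by linarith
    rw [hX] at this; linarith
  have part2 : n = b → (n, s) = (b, r) := by
    intro hnb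
    have hX : (∫ u in (0:ℝ)..ρ, Real.cos (α u)) = ρ * Real.cos lam := by
      rw [hρc]; linarith
    have h0 : K * ((∫ u in (0:ℝ)..ρ, Real.cos (α u)) - ρ * Real.cos lam) = 0 := by
      rw [hX]; ring
    have : r ≤ s := by linarith
    rw [Prod.mk.injEq]
    exact ⟨hnb, le_antisymm part4u this⟩
  refine ⟨part1, part2, ?_, ⟨by linarith, part4u⟩⟩
  intro hne
  have hbn : b < n := lt_of_le_of_ne part1 (fun h => hne (part2 h.symm))
  refine ⟨hbn, ?_⟩
  -- intermediate value
  have hIOn : MeasureTheory.IntegrableOn (fun u => Real.cos (α u)) (Icc 0 ρ)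
      MeasureTheory.volume := by
    rw [← intervalIntegrable_iff_integrableOn_Icc_of_le hρpos.le]
    exact hIcos ρ hρI
  have hcont : ContinuousOn (fun σ => ∫ u in (0:ℝ)..σ, Real.cos (α u)) (Icc 0 ρ) := by
    have := intervalIntegral.continuousOn_primitive_interval
      (a := 0) (b := ρ) (f := fun u => Real.cos (α u)) (μ := MeasureTheory.volume)
      (by rwa [uIcc_of_le hρpos.le])
    rwa [uIcc_of_le hρpos.le] at this
  have hval : b - a ∈ Icc ((fun σ => ∫ u in (0:ℝ)..σ, Real.cos (α u)) 0)
      ((fun σ => ∫ u in (0:ℝ)..σ, Real.cos (α u)) ρ) := by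
    simp only [intervalIntegral.integral_same]
    exact ⟨hd.le, by linarith⟩
  obtain ⟨σ, hσ, hFσ⟩ := intermediate_value_Icc hρpos.le hcont hval
  simp only at hFσ
  refine ⟨σ, hσ, p + ∫ u in (0:ℝ)..σ, Real.sin (α u), ?_, ?_, ?_⟩
  · rw [hγ σ, hFσ]; rw [Prod.mk.injEq]; constructor <;> ring_nf
  · have := B5 σ hσ
    rw [hFσ] at this
    have ht1d : t1 * (b - a) = q - p := by rw [ht1, div_mul_eq_mul_div, mul_div_assoc, div_self hd.ne', mul_one]
    linarith
  · by_contra hmr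
    push_neg at hmr
    have hsinpos : 0 < Real.sin lam :=
      Real.sin_pos_of_pos_of_lt_pi hlam0 (by linarith [Real.pi_pos])
    have h1 : r - p ≤ σ * Real.sin lam := by linarith [B4 σ hσ]
    have h2 : ρ ≤ σ := by
      rw [← hρs] at h1
      exact le_of_mul_le_mul_right (by linarith) hsinpos
    have hσρ : σ = ρ := le_antisymm hσ.2 h2
    rw [hσρ] at hFσ
    have : n = b := by linarith
    exact absurd this hbn.ne'
end

section
/- Let γ : [s,t] → ℝ² be a unit-speed curve whose tangent angle function α is nondecreasing with total increase at most Ω < π/2 on [s,t]. Then the chord length satisfies |γ(t) − γ(s)| ≥ (t − s)·cos Ω; in particular chord length and arc length are comparable: (t−s)·cos Ω ≤ |γ(t) − γ(s)| ≤ t − s. -/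
open Set Real

noncomputable def dir (θ : ℝ) : EuclideanSpace ℝ (Fin 2) := WithLp.toLp 2 ![Real.cos θ, Real.sin θ]

lemma dir_norm_one (θ : ℝ) : ‖dir θ‖ = 1 := by
  unfold dir
  rw [EuclideanSpace.norm_eq]
  simp only [PiLp.toLp_apply, Fin.sum_univ_two, Matrix.cons_val_zero, Matrix.cons_val_one, Matrix.head_cons,
    Real.norm_eq_abs, sq_abs]
  rw [show (Real.cos θ)^2 + (Real.sin θ)^2 = 1 from by
    rw [add_comm]; exact Real.sin_sq_add_cos_sq θ]
  exact Real.sqrt_one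

lemma dir_inner (θ₁ θ₂ : ℝ) :
    (inner ℝ (dir θ₁) (dir θ₂) : ℝ) = Real.cos (θ₂ - θ₁) := by
  unfold dir
  simp [PiLp.inner_apply, Fin.sum_univ_two, RCLike.inner_apply, Real.cos_sub]

/-- Chord length and arc length are comparable for a unit-speed convex curve whose
tangent angle increases by at most `Ω < π/2`:
`(t - s)·cos Ω ≤ |γ t - γ s| ≤ t - s`. -/
theorem chord_arc_comparison
    (s t Ω : ℝ) (hst : s ≤ t) (hΩ0 : 0 ≤ Ω) (hΩ : Ω < Real.pi / 2)
    (α : ℝ → ℝ) (hmono : MonotoneOn α (Icc s t))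
    (hincr : α t - α s ≤ Ω)
    (γ : ℝ → EuclideanSpace ℝ (Fin 2))
    (hderiv : ∀ σ ∈ Icc s t,
      HasDerivAt γ (WithLp.toLp 2 ![Real.cos (α σ), Real.sin (α σ)] : EuclideanSpace ℝ (Fin 2)) σ) :
    (t - s) * Real.cos Ω ≤ ‖γ t - γ s‖ ∧ ‖γ t - γ s‖ ≤ t - s := by
  have hs : s ∈ Icc s t := ⟨le_refl s, hst⟩
  have ht : t ∈ Icc s t := ⟨hst, le_refl t⟩
  constructor
  · -- lower bound
    set u : EuclideanSpace ℝ (Fin 2) := dir (α s) with hu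
    set f : ℝ → ℝ := fun σ => (inner ℝ u (γ σ) : ℝ) - σ * Real.cos Ω with hf
    have hfd : ∀ σ ∈ Icc s t,
        HasDerivAt f (Real.cos (α σ - α s) - Real.cos Ω) σ := by
      intro σ hσ
      have hd' : HasDerivAt γ (dir (α σ)) σ := hderiv σ hσ
      have h1 : HasDerivAt (fun σ => (inner ℝ u (γ σ) : ℝ))
          (inner ℝ u (dir (α σ)) : ℝ) σ :=
        (innerSL ℝ u).hasFDerivAt.comp_hasDerivAt σ hd' 
      rw [hu, dir_inner] at h1
      have h2 : HasDerivAt (fun y : ℝ => y * Real.cos Ω) (Real.cos Ω) σ := by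
        simpa using (hasDerivAt_id σ).mul_const (Real.cos Ω)
      exact h1.sub h2
    have hd_nonneg : ∀ σ ∈ Icc s t, 0 ≤ Real.cos (α σ - α s) - Real.cos Ω := by
      intro σ hσ
      have h1 : α s ≤ α σ := hmono hs hσ hσ.1
      have h2 : α σ ≤ α t := hmono hσ ht hσ.2
      have h3 : α σ - α s ≤ Ω := le_trans (by linarith) hincr
      have : Real.cos Ω ≤ Real.cos (α σ - α s) :=
        Real.cos_le_cos_of_nonneg_of_le_pi (by linarith) (by linarith [Real.pi_pos]) h3
      linarith
    have hmonof : MonotoneOn f (Icc s t) := by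
      apply monotoneOn_of_deriv_nonneg (convex_Icc s t)
      · exact fun σ hσ => ((hfd σ hσ).continuousAt).continuousWithinAt
      · intro σ hσ
        rw [interior_Icc] at hσ
        exact (hfd σ (Ioo_subset_Icc_self hσ)).differentiableAt.differentiableWithinAt
      · intro σ hσ
        rw [interior_Icc] at hσ
        rw [(hfd σ (Ioo_subset_Icc_self hσ)).deriv]
        exact hd_nonneg σ (Ioo_subset_Icc_self hσ)
    have hff : f s ≤ f t := hmonof hs ht hst
    have hinner : (t - s) * Real.cos Ω ≤ (inner ℝ u (γ t - γ s) : ℝ) := by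
      rw [inner_sub_right]
      simp only [hf] at hff
      linarith
    calc (t - s) * Real.cos Ω ≤ (inner ℝ u (γ t - γ s) : ℝ) := hinner
      _ ≤ ‖u‖ * ‖γ t - γ s‖ := real_inner_le_norm u _
      _ = ‖γ t - γ s‖ := by rw [hu, dir_norm_one, one_mul]
  · -- upper bound
    have := (convex_Icc s t).norm_image_sub_le_of_norm_hasDerivWithin_le
      (f' := fun σ => dir (α σ))
      (fun σ hσ => (show HasDerivAt γ (dir (α σ)) σ from hderiv σ hσ).hasDerivWithinAt)
      (fun σ hσ => le_of_eq (dir_norm_one (α σ))) hs ht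
    simpa [abs_of_nonneg (sub_nonneg.2 hst)] using this
end

section
/- Let γ be the boundary of a planar convex body, parameterized by arc length, and suppose its tangent angle function α (nondecreasing, with one-sided versions α₋, α₊) satisfies: the a.e. derivative α' ≥ κ₀ > 0 almost everywhere. Then for any two points x = γ(s₀), y = γ(t) with s₀ < t on the boundary, and any outer unit normals u at x and v at y (with the angle from u to v along the arc not exceeding π), the angle arccos⟨u,v⟩ ≥ κ₀ (t − s₀) ≥ κ₀ |x − y|. In particular, the minimal oscillation of the normal vector function with respect to chord length satisfies Ω(n, τ) ≥ κ₀ τ. -/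
open Set Real intervalIntegral

set_option maxHeartbeats 1000000 in
/-- For an arc-length parameterized convex boundary curve whose (nondecreasing) tangent
angle function increases at rate at least `κ₀ > 0`, the angle between outer unit
normals at two boundary points is at least `κ₀` times the arc length between them,
hence at least `κ₀` times the chord length; in particular the minimal oscillation of
the normal with respect to chord length is at least `κ₀ τ`. -/
theorem normal_oscillation_lower_bound
    (κ₀ : ℝ) (hκ₀ : 0 < κ₀)
    (α : ℝ → ℝ) (hmono : Monotone α)
    (hlow : ∀ s t : ℝ, s ≤ t → κ₀ * (t - s) ≤ α t - α s)
    (γ : ℝ → EuclideanSpace ℝ (Fin 2))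
    (hγ : ∀ s : ℝ, γ s = γ 0 + (WithLp.equiv 2 (Fin 2 → ℝ)).symm
        ![∫ u in (0:ℝ)..s, Real.cos (α u), ∫ u in (0:ℝ)..s, Real.sin (α u)])
    (s₀ t : ℝ) (hst : s₀ < t)
    (θ₁ θ₂ : ℝ)
    (hθ₁l : ∀ s < s₀, α s ≤ θ₁) (hθ₁r : ∀ s > s₀, θ₁ ≤ α s)
    (hθ₂l : ∀ s < t, α s ≤ θ₂) (hθ₂r : ∀ s > t, θ₂ ≤ α s)
    (u v : EuclideanSpace ℝ (Fin 2))
    (hu : u = (WithLp.toLp 2 ![Real.sin θ₁, -Real.cos θ₁] : EuclideanSpace ℝ (Fin 2)))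
    (hv : v = (WithLp.toLp 2 ![Real.sin θ₂, -Real.cos θ₂] : EuclideanSpace ℝ (Fin 2)))
    (hangle : θ₂ - θ₁ ≤ Real.pi) :
    κ₀ * (t - s₀) ≤ Real.arccos (inner ℝ u v : ℝ) ∧
    κ₀ * ‖γ t - γ s₀‖ ≤ κ₀ * (t - s₀) ∧
    (∀ τ : ℝ, 0 ≤ τ → τ ≤ ‖γ t - γ s₀‖ → κ₀ * τ ≤ Real.arccos (inner ℝ u v : ℝ)) := by
  -- integrability of the component functions
  have hic : ∀ (f : ℝ → ℝ), Continuous f → (∀ x, ‖f x‖ ≤ 1) → ∀ a b : ℝ,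
      IntervalIntegrable (fun u => f (α u)) MeasureTheory.volume a b := by
    intro f hf hb a b
    rw [intervalIntegrable_iff]
    apply MeasureTheory.Measure.integrableOn_of_bounded (M := 1)
      measure_Ioc_lt_top.ne
    · exact (hf.measurable.comp hmono.measurable).aestronglyMeasurable
    · filter_upwards with x; exact hb _
  have hcos := hic Real.cos Real.continuous_cos
    (fun x => by rw [Real.norm_eq_abs]; exact Real.abs_cos_le_one x)
  have hsin := hic Real.sin Real.continuous_sin
    (fun x => by rw [Real.norm_eq_abs]; exact Real.abs_sin_le_one x)
  set A := ∫ u in s₀..t, Real.cos (α u) with hA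
  set B := ∫ u in s₀..t, Real.sin (α u) with hB
  -- components of the chord vector
  have h0 : (γ t - γ s₀) 0 = A := by
    have := intervalIntegral.integral_interval_sub_left (hcos 0 t) (hcos 0 s₀)
    rw [hγ t, hγ s₀]
    simpa using this
  have h1 : (γ t - γ s₀) 1 = B := by
    have := intervalIntegral.integral_interval_sub_left (hsin 0 t) (hsin 0 s₀)
    rw [hγ t, hγ s₀]
    simpa using this
  have hnorm : ‖γ t - γ s₀‖ = Real.sqrt (A ^ 2 + B ^ 2) := by
    rw [EuclideanSpace.norm_eq, Fin.sum_univ_two, h0, h1]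
    simp [Real.norm_eq_abs, sq_abs]
  -- chord length is at most arc length
  have hchord : ‖γ t - γ s₀‖ ≤ t - s₀ := by
    rw [hnorm]
    set r := Real.sqrt (A ^ 2 + B ^ 2) with hr
    have hr0 : 0 ≤ r := Real.sqrt_nonneg _
    rcases eq_or_lt_of_le hr0 with h | h
    · linarith
    · have hr2 : r ^ 2 = A ^ 2 + B ^ 2 := Real.sq_sqrt (by positivity)
      set c := A / r with hc
      set d := B / r with hd
      have hcd : c ^ 2 + d ^ 2 = 1 := by
        rw [hc, hd]
        field_simp
        linarith [hr2]
      have key : ∫ u in s₀..t, (c * Real.cos (α u) + d * Real.sin (α u)) = r := by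
        rw [intervalIntegral.integral_add ((hcos s₀ t).const_mul c)
          ((hsin s₀ t).const_mul d), intervalIntegral.integral_const_mul,
          intervalIntegral.integral_const_mul, ← hA, ← hB]
        rw [hc, hd]
        field_simp
        linarith [hr2]
      have hle : ∫ u in s₀..t, (c * Real.cos (α u) + d * Real.sin (α u)) ≤
          ∫ _u in s₀..t, (1 : ℝ) := by
        apply intervalIntegral.integral_mono_on hst.le
          (((hcos s₀ t).const_mul c).add ((hsin s₀ t).const_mul d))
          intervalIntegrable_const
        intro x _
        nlinarith [sq_nonneg (c - Real.cos (α x)), sq_nonneg (d - Real.sin (α x)),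
          Real.sin_sq_add_cos_sq (α x)]
      rw [key] at hle
      simpa using hle
  -- the angle lower bound
  have hlb : κ₀ * (t - s₀) ≤ θ₂ - θ₁ := by
    apply le_of_forall_pos_le_add
    intro ε hε
    set δ := min ((t - s₀) / 2) (ε / (2 * κ₀)) with hδ
    have hδ0 : 0 < δ := lt_min (by linarith) (by positivity)
    have hδ1 : δ ≤ (t - s₀) / 2 := min_le_left _ _
    have hδ2 : δ ≤ ε / (2 * κ₀) := min_le_right _ _
    have h1 := hlow (s₀ + δ) (t - δ) (by linarith)
    have h2 := hθ₁r (s₀ + δ) (by linarith)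
    have h3 := hθ₂l (t - δ) (by linarith)
    have h4 : κ₀ * δ ≤ ε / 2 := by
      have he : κ₀ * (ε / (2 * κ₀)) = ε / 2 := by field_simp
      nlinarith
    nlinarith
  have hθnn : 0 ≤ θ₂ - θ₁ := le_trans (by nlinarith) hlb
  have hinner : (inner ℝ u v : ℝ) = Real.cos (θ₂ - θ₁) := by
    subst hu hv
    simp [PiLp.inner_apply, Fin.sum_univ_two, RCLike.inner_apply, Real.cos_sub]
    ring
  have harccos : Real.arccos (inner ℝ u v : ℝ) = θ₂ - θ₁ := by
    rw [hinner, Real.arccos_cos hθnn hangle]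
  refine ⟨by rw [harccos]; exact hlb, by nlinarith, fun τ hτ0 hτ => ?_⟩
  rw [harccos]
  have : τ ≤ t - s₀ := le_trans hτ hchord
  nlinarith
end

section
/- Let K be a convex body in a Hilbert space H, x ∈ ∂K, and P a closed affine subspace through x containing an interior point of K; set K₀ := K ∩ P. If u is an outer unit normal of K at x, write u = Πu + u' with Πu ∈ P − x and u' ⊥ (P − x); then Πu ≠ 0 and w := Πu/|Πu| is an outer unit normal of K₀ at x within P, i.e., ⟨w, y − x⟩ ≤ 0 for all y ∈ K₀. -/
/-- If `u` is an outer unit normal of a convex body `K` at `x ∈ ∂K`, and `P = x + V`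
is a closed affine subspace through `x` containing an interior point of `K`, then in
the orthogonal decomposition `u = w' + u'` with `w' ∈ V`, `u' ⊥ V`, the component
`w'` is nonzero and `w'/‖w'‖` is an outer unit normal of `K₀ = K ∩ P` at `x` within `P`. -/
theorem projected_normal_is_normal_of_section
    {H : Type*} [NormedAddCommGroup H] [InnerProductSpace ℝ H] [CompleteSpace H]
    (K : Set H) (hKconv : Convex ℝ K) (hKcl : IsClosed K)
    (hKbd : Bornology.IsBounded K) (hKint : (interior K).Nonempty)
    (x : H) (hx : x ∈ frontier K)
    (V : Submodule ℝ H) (hVcl : IsClosed (V : Set H))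
    (hP : ∃ y ∈ interior K, y - x ∈ V)
    (u : H) (hu : ‖u‖ = 1)
    (hnormal : ∀ y ∈ K, (inner ℝ u (y - x) : ℝ) ≤ 0)
    (w' u' : H) (hw' : w' ∈ V) (hu' : u' ∈ Vᗮ) (hdecomp : u = w' + u') :
    w' ≠ 0 ∧ ∀ y ∈ K ∩ {z : H | z - x ∈ V}, (inner ℝ (‖w'‖⁻¹ • w') (y - x) : ℝ) ≤ 0 := by
  obtain ⟨y, hyint, hyV⟩ := hP
  constructor
  · intro h0
    have hu'eq : u = u' := by rw [hdecomp, h0, zero_add]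
    have h1 : (inner ℝ u (y - x) : ℝ) = 0 := by
      rw [hu'eq, real_inner_comm]
      exact (Submodule.mem_orthogonal _ _).mp hu' _ hyV
    obtain ⟨ε, hε, hball⟩ := Metric.isOpen_iff.mp isOpen_interior y hyint
    have hy2 : y + (ε/2) • u ∈ K := by
      apply interior_subset
      apply hball
      simp only [Metric.mem_ball, dist_eq_norm, add_sub_cancel_left, norm_smul, hu,
        Real.norm_eq_abs, mul_one, abs_of_pos (half_pos hε)]
      linarith
    have h2 := hnormal _ hy2
    have h3 : (inner ℝ u (y + (ε/2) • u - x) : ℝ) = ε/2 := by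
      have he : y + (ε/2) • u - x = (y - x) + (ε/2) • u := by abel
      rw [he, inner_add_right, h1, inner_smul_right, real_inner_self_eq_norm_sq, hu]
      ring
    linarith
  · rintro y₀ ⟨hy₀K, hy₀V⟩
    have h0 : (inner ℝ u' (y₀ - x) : ℝ) = 0 := by
      rw [real_inner_comm]
      exact (Submodule.mem_orthogonal _ _).mp hu' _ hy₀V
    have h : (inner ℝ w' (y₀ - x) : ℝ) ≤ 0 := by
      have h2 := hnormal y₀ hy₀K
      rw [hdecomp, inner_add_left, h0, add_zero] at h2
      exact h2
    rw [real_inner_smul_left]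
    exact mul_nonpos_of_nonneg_of_nonpos (by positivity) h
end

section
/- Let K be a convex body in a Hilbert space H, x ∈ ∂K, and P a closed affine subspace through x containing an interior point of K; set K₀ := K ∩ P. Then for every outer unit normal w of K₀ at x within P, there exists an outer unit normal u of K at x such that Πu is a nonzero positive multiple of w, where Π is the orthogonal projection onto P − x. -/
open Set Metric Filter Topology

/-- Every outer unit normal `w` of the section `K₀ = K ∩ P` at `x` within the closed
affine subspace `P = x + V` (which contains an interior point of `K`) lifts to an
outer unit normal `u` of `K` at `x` whose orthogonal projection to `V` is a nonzero
positive multiple of `w` (i.e. `u - c • w ⊥ V` for some `c > 0`). -/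
theorem section_normal_lifts_to_space_normal
    {H : Type*} [NormedAddCommGroup H] [InnerProductSpace ℝ H] [CompleteSpace H]
    (K : Set H) (hKconv : Convex ℝ K) (hKcl : IsClosed K)
    (hKbd : Bornology.IsBounded K) (hKint : (interior K).Nonempty)
    (x : H) (hx : x ∈ frontier K)
    (V : Submodule ℝ H) (hVcl : IsClosed (V : Set H))
    (hP : ∃ y ∈ interior K, y - x ∈ V)
    (w : H) (hwV : w ∈ V) (hw : ‖w‖ = 1)
    (hwnormal : ∀ y ∈ K ∩ {z : H | z - x ∈ V}, (inner ℝ w (y - x) : ℝ) ≤ 0) :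
    ∃ u : H, ‖u‖ = 1 ∧ (∀ y ∈ K, (inner ℝ u (y - x) : ℝ) ≤ 0) ∧
      ∃ c : ℝ, 0 < c ∧ u - c • w ∈ Vᗮ := by
  classical
  obtain ⟨y, hyK, hyV⟩ := hP
  have hxK : x ∈ K := by
    have := frontier_subset_closure hx
    rwa [hKcl.closure_eq] at this
  have hww : (inner ℝ w w : ℝ) = 1 := by
    rw [real_inner_self_eq_norm_sq, hw]; norm_num
  -- the disk: unit ball of V ∩ w^⊥
  set S : Set H := {v : H | v ∈ V ∧ (inner ℝ w v : ℝ) = 0 ∧ ‖v‖ ≤ 1} with hSdef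
  have hScv : Convex ℝ S := by
    intro a ha b hb p q hp hq hpq
    refine ⟨V.add_mem (V.smul_mem _ ha.1) (V.smul_mem _ hb.1), ?_, ?_⟩
    · rw [inner_add_right, real_inner_smul_right, real_inner_smul_right, ha.2.1, hb.2.1]
      ring
    · calc ‖p • a + q • b‖ ≤ ‖p • a‖ + ‖q • b‖ := norm_add_le _ _
        _ = p * ‖a‖ + q * ‖b‖ := by
            rw [norm_smul, norm_smul, Real.norm_of_nonneg hp, Real.norm_of_nonneg hq]
        _ ≤ p * 1 + q * 1 := by
            have := ha.2.2; have := hb.2.2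
            nlinarith
        _ = 1 := by linarith
  set D : Set H := (fun v => x + v) '' S with hDdef
  have hDcv : Convex ℝ D := hScv.translate x
  have hxD : x ∈ D := ⟨0, ⟨V.zero_mem, by simp, by simp⟩, by simp⟩
  set M : Set H := convexHull ℝ (K ∪ D) with hMdef
  have hMcv : Convex ℝ M := convex_convexHull _ _
  have hKM : K ⊆ M := subset_union_left.trans (subset_convexHull _ _)
  have hDM : D ⊆ M := subset_union_right.trans (subset_convexHull _ _)
  have hMeq : M = convexJoin ℝ K D := hKconv.convexHull_union hDcv ⟨x, hxK⟩ ⟨x, hxD⟩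
  -- points x + t•w for t > 0 are not in M
  have notinM : ∀ t : ℝ, 0 < t → x + t • w ∉ M := by
    intro t ht hmem
    rw [hMeq, mem_convexJoin] at hmem
    obtain ⟨a, haK, b, hbD, p, q, hp, hq, hpq, heq⟩ := hmem
    obtain ⟨v, ⟨hvV, hvw, -⟩, rfl⟩ := hbD
    have hq' : q = 1 - p := by linarith
    subst hq'
    have heq2 : p • (a - x) + (1 - p) • v = t • w := by
      have h := heq
      apply_fun (fun z => z - x) at h
      rw [show p • a + (1 - p) • (x + v) - x = p • (a - x) + (1 - p) • v by module] at h
      rw [h]; abel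
    have hinner : p * (inner ℝ w (a - x) : ℝ) = t := by
      have h := congrArg (fun z : H => (inner ℝ w z : ℝ)) heq2
      simpa [inner_add_right, real_inner_smul_right, hvw, hww, hw] using h
    rcases eq_or_lt_of_le hp with hp0 | hp0
    · rw [← hp0] at hinner; simp at hinner; linarith
    · have haV : a - x ∈ V := by
        have h1 : p • (a - x) ∈ V := by
          rw [show p • (a - x) = t • w - (1 - p) • v by
            rw [← heq2]; abel]
          exact V.sub_mem (V.smul_mem _ hwV) (V.smul_mem _ hvV)
        have h2 := V.smul_mem p⁻¹ h1
        rwa [smul_smul, inv_mul_cancel₀ (ne_of_gt hp0), one_smul] at h2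
      have := hwnormal a ⟨haK, haV⟩
      nlinarith
  -- x is not in the interior of M
  have hxnotint : x ∉ interior M := by
    intro h
    obtain ⟨ε, hε, hball⟩ := Metric.isOpen_iff.mp isOpen_interior x h
    have hmem : x + (ε / 2) • w ∈ ball x ε := by
      rw [mem_ball, dist_eq_norm]
      rw [show x + (ε / 2) • w - x = (ε / 2) • w by abel]
      rw [norm_smul, hw, Real.norm_of_nonneg (by linarith)]
      linarith
    exact notinM (ε / 2) (by linarith) (interior_subset (hball hmem))
  -- disjointness of interior M and the segment [x, x+w]
  have hdisj : Disjoint (interior M) (segment ℝ x (x + w)) := by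
    rw [Set.disjoint_right]
    rintro z ⟨p, q, hp, hq, hpq, rfl⟩ hzint
    have hz : p • x + q • (x + w) = x + q • w := by
      rw [show p • x + q • (x + w) = (p + q) • x + q • w by module, hpq, one_smul]
    rw [hz] at hzint
    rcases eq_or_lt_of_le hq with hq0 | hq0
    · rw [← hq0] at hzint; simp at hzint; exact hxnotint hzint
    · exact notinM q hq0 (interior_subset hzint)
  -- Hahn-Banach separation
  obtain ⟨f, s₀, hfs, hft⟩ :=
    geometric_hahn_banach_open hMcv.interior isOpen_interior (convex_segment _ _) hdisj
  obtain ⟨y₀, hy₀⟩ := hKint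
  have hy₀M : y₀ ∈ interior M := interior_mono hKM hy₀
  -- f ≤ s₀ on all of M
  have hMle : ∀ z ∈ M, f z ≤ s₀ := by
    intro z hz
    have hcont : Tendsto (fun t : ℝ => f (z + t • (y₀ - z))) (𝓝[>] 0) (𝓝 (f z)) := by
      have hc : Continuous fun t : ℝ => f (z + t • (y₀ - z)) := by fun_prop
      have h0 : f (z + (0 : ℝ) • (y₀ - z)) = f z := by simp
      exact h0 ▸ ((hc.tendsto 0).mono_left nhdsWithin_le_nhds)
    refine le_of_tendsto hcont ?_
    filter_upwards [Ioc_mem_nhdsGT_of_mem (by norm_num : (0:ℝ) ∈ Ico (0:ℝ) 1)] with t ht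
    exact (hfs _ (hMcv.add_smul_sub_mem_interior hz hy₀M ht)).le
  have hfx : f x = s₀ :=
    le_antisymm (hMle x (hKM hxK)) (hft x (left_mem_segment ℝ x (x + w)))
  -- f vanishes on V ∩ w^⊥
  have hV'0 : ∀ v : H, v ∈ V → (inner ℝ w v : ℝ) = 0 → f v = 0 := by
    have key : ∀ v : H, v ∈ V → (inner ℝ w v : ℝ) = 0 → ‖v‖ ≤ 1 → f v ≤ 0 := by
      intro v hvV hvw hvn
      have hD : x + v ∈ D := ⟨v, ⟨hvV, hvw, hvn⟩, rfl⟩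
      have h1 : f (x + v) ≤ s₀ := hMle _ (hDM hD)
      rw [map_add] at h1
      linarith
    intro v hvV hvw
    rcases eq_or_ne v 0 with rfl | hv0
    · simp
    · have hn : 0 < ‖v‖ := norm_pos_iff.mpr hv0
      have hn1 : ‖‖v‖⁻¹ • v‖ ≤ 1 := by
        rw [norm_smul, Real.norm_of_nonneg (by positivity), inv_mul_cancel₀ hn.ne']
      have hw1 : (inner ℝ w (‖v‖⁻¹ • v) : ℝ) = 0 := by
        rw [real_inner_smul_right, hvw]; ring
      have hmem : ‖v‖⁻¹ • v ∈ V := V.smul_mem _ hvV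
      have h1 : f (‖v‖⁻¹ • v) ≤ 0 := key _ hmem hw1 hn1
      have h2 : f (-(‖v‖⁻¹ • v)) ≤ 0 := by
        refine key _ (V.neg_mem hmem) ?_ (by rwa [norm_neg])
        rw [inner_neg_right, hw1]; ring
      rw [map_neg] at h2
      have h3 : f (‖v‖⁻¹ • v) = 0 := le_antisymm h1 (by linarith)
      have h4 : f v = ‖v‖ * f (‖v‖⁻¹ • v) := by
        rw [map_smul, smul_eq_mul, ← mul_assoc, mul_inv_cancel₀ hn.ne', one_mul]
      rw [h4, h3, mul_zero]
  -- on V, f is determined by f w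
  have hfV : ∀ v : H, v ∈ V → f v = (inner ℝ w v : ℝ) * f w := by
    intro v hv
    set v' := v - (inner ℝ w v : ℝ) • w with hv'def
    have hv'V : v' ∈ V := V.sub_mem hv (V.smul_mem _ hwV)
    have hv'w : (inner ℝ w v' : ℝ) = 0 := by
      rw [hv'def, inner_sub_right, real_inner_smul_right, hww]; ring
    have hfv' : f v' = 0 := hV'0 v' hv'V hv'w
    have hvd : v = (inner ℝ w v : ℝ) • w + v' := by rw [hv'def]; abel
    have : f v = (inner ℝ w v : ℝ) * f w + f v' := by
      conv_lhs => rw [hvd]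
      rw [map_add, map_smul, smul_eq_mul]
    rw [this, hfv']; ring
  -- f w > 0
  have hfw0 : 0 ≤ f w := by
    have := hft (x + w) (right_mem_segment ℝ x (x + w))
    rw [map_add] at this; linarith
  have hylt : f y < s₀ := hfs y (interior_mono hKM hyK)
  have hfwpos : 0 < f w := by
    rcases eq_or_lt_of_le hfw0 with h0 | h0
    · exfalso
      have hy0 : f (y - x) = 0 := by rw [hfV _ hyV, ← h0]; ring
      rw [map_sub] at hy0
      linarith
    · exact h0
  -- translate f into an inner product
  set u₀ : H := (InnerProductSpace.toDual ℝ H).symm f with hu₀def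
  have hu₀ : ∀ z : H, (inner ℝ u₀ z : ℝ) = f z := fun z =>
    InnerProductSpace.toDual_symm_apply
  have hn0 : u₀ ≠ 0 := by
    intro h
    have := hu₀ w
    rw [h] at this
    simp at this
    linarith
  have hnpos : 0 < ‖u₀‖ := norm_pos_iff.mpr hn0
  refine ⟨‖u₀‖⁻¹ • u₀, ?_, ?_, ‖u₀‖⁻¹ * f w, ?_, ?_⟩
  · rw [norm_smul, Real.norm_of_nonneg (by positivity), inv_mul_cancel₀ hnpos.ne']
  · intro z hz
    have h1 : (inner ℝ u₀ (z - x) : ℝ) ≤ 0 := by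
      rw [hu₀, map_sub]
      have := hMle z (hKM hz)
      linarith
    rw [real_inner_smul_left]
    have h2 : (0:ℝ) ≤ ‖u₀‖⁻¹ := by positivity
    nlinarith
  · exact mul_pos (by positivity) hfwpos
  · rw [Submodule.mem_orthogonal]
    intro v hv
    rw [real_inner_comm, inner_sub_left, real_inner_smul_left, real_inner_smul_left,
      hu₀, hfV v hv]
    ring
end

section
/- Let K be a convex body in a Hilbert space H with c ∈ int K such that B(c,r) ⊆ K ⊆ B(c,R), 0 < r < R. Let x ∈ ∂K, let P be a closed affine subspace containing x and c, let Π be the orthogonal projection onto P − x, and let u be an outer unit normal to K at x. Then |Πu| ≥ r/R. -/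
/-- Quantitative nonvanishing of the projected normal: if `B(c,r) ⊆ K ⊆ B(c,R)` with
`0 < r < R`, `x ∈ ∂K`, the affine subspace `P = x + V` is closed and contains `c`,
and `u` is an outer unit normal to `K` at `x` with orthogonal decomposition
`u = w' + u'`, `w' ∈ V`, `u' ⊥ V`, then `‖w'‖ ≥ r/R`. -/
theorem projected_normal_norm_lower_bound
    {H : Type*} [NormedAddCommGroup H] [InnerProductSpace ℝ H] [CompleteSpace H]
    (K : Set H) (hKconv : Convex ℝ K) (hKcl : IsClosed K)
    (c : H) (r R : ℝ) (hr : 0 < r) (hrR : r < R)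
    (hball : Metric.closedBall c r ⊆ K) (hBall : K ⊆ Metric.closedBall c R)
    (x : H) (hx : x ∈ frontier K)
    (V : Submodule ℝ H) (hVcl : IsClosed (V : Set H))
    (hcP : c - x ∈ V)
    (u : H) (hu : ‖u‖ = 1)
    (hnormal : ∀ y ∈ K, (inner ℝ u (y - x) : ℝ) ≤ 0)
    (w' u' : H) (hw' : w' ∈ V) (hu' : u' ∈ Vᗮ) (hdecomp : u = w' + u') :
    r / R ≤ ‖w'‖ := by
  -- y := c + r • u belongs to the small ball, hence to K
  have hyK : c + r • u ∈ K := by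
    apply hball
    simp [Metric.mem_closedBall, dist_eq_norm, norm_smul, hu, abs_of_pos hr, hr.le]
  have h1 : (inner ℝ u (c + r • u - x) : ℝ) ≤ 0 := hnormal _ hyK
  have h2 : (inner ℝ u (c - x) : ℝ) + r ≤ 0 := by
    have : (inner ℝ u (c + r • u - x) : ℝ)
        = (inner ℝ u (c - x) : ℝ) + r * (inner ℝ u u : ℝ) := by
      rw [show c + r • u - x = (c - x) + r • u by abel, inner_add_right,
        inner_smul_right]
    rw [this, real_inner_self_eq_norm_sq, hu] at h1
    linarith
  -- ⟨u, c-x⟩ = ⟨w', c-x⟩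
  have h3 : (inner ℝ u (c - x) : ℝ) = inner ℝ w' (c - x) := by
    rw [hdecomp, inner_add_left]
    have : (inner ℝ u' (c - x) : ℝ) = 0 := by rw [real_inner_comm]; exact hu' _ hcP
    linarith
  have h4 : r ≤ ‖w'‖ * ‖c - x‖ := by
    have := abs_real_inner_le_norm w' (c - x)
    have h5 : (inner ℝ w' (c - x) : ℝ) ≤ -r := by linarith [h3 ▸ h2]
    have : r ≤ |(inner ℝ w' (c - x) : ℝ)| := by
      rw [abs_of_nonpos (by linarith)]; linarith
    calc r ≤ |(inner ℝ w' (c - x) : ℝ)| := this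
      _ ≤ ‖w'‖ * ‖c - x‖ := abs_real_inner_le_norm _ _
  have hxK : x ∈ K := hKcl.frontier_subset hx
  have hxR : ‖c - x‖ ≤ R := by
    have := hBall hxK
    rw [Metric.mem_closedBall, dist_comm, dist_eq_norm] at this
    exact this
  have hR : 0 < R := hr.trans hrR
  rw [div_le_iff₀ hR]
  calc r ≤ ‖w'‖ * ‖c - x‖ := h4
    _ ≤ ‖w'‖ * R := by
        exact mul_le_mul_of_nonneg_left hxR (norm_nonneg _)
end

section
/- Let K be a convex body in a Hilbert space H with B(c,r) ⊆ K ⊆ B(c,R), 0 < r < R, and let P be a two-dimensional affine plane through c. Set K₀ := K ∩ P, let n denote the (multivalued) outer unit normal function of K along ∂K, and ν the (multivalued) outer unit normal function of K₀ along ∂K₀ within P. Define the norm-distance modulus of continuity ω̄(v,τ) := sup{ ‖u − w‖ : x, y in the domain, ‖x − y‖ ≤ τ, u ∈ v(x), w ∈ v(y) }. Then ω̄(ν, τ) ≤ (2R/r)·ω̄(n, τ) for every τ > 0. -/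
open ENNReal

/-- Normalization estimate: if `‖a‖, ‖b‖ ≥ ρ > 0` then the normalized vectors
differ by at most `(2/ρ)‖a - b‖`. -/
lemma aux_normalize {H : Type*} [NormedAddCommGroup H] [NormedSpace ℝ H]
    {ρ : ℝ} (hρ : 0 < ρ) {a b : H} (ha : ρ ≤ ‖a‖) (hb : ρ ≤ ‖b‖) :
    ‖‖a‖⁻¹ • a - ‖b‖⁻¹ • b‖ ≤ (2 / ρ) * ‖a - b‖ := by
  have ha0 : (0:ℝ) < ‖a‖ := lt_of_lt_of_le hρ ha
  have hb0 : (0:ℝ) < ‖b‖ := lt_of_lt_of_le hρ hb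
  have key : ‖a‖⁻¹ • a - ‖b‖⁻¹ • b
      = ‖a‖⁻¹ • (a - b) + (‖a‖⁻¹ - ‖b‖⁻¹) • b := by
    rw [smul_sub, sub_smul]; abel
  rw [key]
  have h1 : ‖‖a‖⁻¹ • (a - b)‖ = ‖a‖⁻¹ * ‖a - b‖ := by
    rw [norm_smul, Real.norm_eq_abs, abs_of_pos (inv_pos.2 ha0)]
  have h2 : ‖(‖a‖⁻¹ - ‖b‖⁻¹) • b‖ = |‖a‖⁻¹ - ‖b‖⁻¹| * ‖b‖ := by
    rw [norm_smul, Real.norm_eq_abs]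
  have h3 : |‖a‖⁻¹ - ‖b‖⁻¹| * ‖b‖ ≤ ‖a‖⁻¹ * ‖a - b‖ := by
    have : |‖a‖⁻¹ - ‖b‖⁻¹| = |‖b‖ - ‖a‖| / (‖a‖ * ‖b‖) := by
      have habs : ‖a‖⁻¹ - ‖b‖⁻¹ = (‖b‖ - ‖a‖) / (‖a‖ * ‖b‖) := by
        field_simp
      rw [habs, abs_div, abs_of_pos (show (0:ℝ) < ‖a‖ * ‖b‖ by positivity)]
    rw [this]
    have h4 : |‖b‖ - ‖a‖| ≤ ‖a - b‖ := by
      rw [abs_sub_comm]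
      exact (abs_norm_sub_norm_le a b).trans (le_refl _)
    calc |‖b‖ - ‖a‖| / (‖a‖ * ‖b‖) * ‖b‖ = |‖b‖ - ‖a‖| / ‖a‖ := by
          field_simp
      _ ≤ ‖a - b‖ / ‖a‖ := by gcongr
      _ = ‖a‖⁻¹ * ‖a - b‖ := by rw [div_eq_inv_mul]
  calc ‖‖a‖⁻¹ • (a - b) + (‖a‖⁻¹ - ‖b‖⁻¹) • b‖
      ≤ ‖‖a‖⁻¹ • (a - b)‖ + ‖(‖a‖⁻¹ - ‖b‖⁻¹) • b‖ := norm_add_le _ _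
    _ ≤ ‖a‖⁻¹ * ‖a - b‖ + ‖a‖⁻¹ * ‖a - b‖ := by rw [h1, h2]; exact add_le_add le_rfl h3
    _ = (2 * ‖a‖⁻¹) * ‖a - b‖ := by ring
    _ ≤ (2 / ρ) * ‖a - b‖ := by
        have : ‖a‖⁻¹ ≤ ρ⁻¹ := inv_anti₀ hρ ha
        have h5 : (2:ℝ) / ρ = 2 * ρ⁻¹ := by rw [div_eq_mul_inv]
        rw [h5]
        have := norm_nonneg (a - b)
        nlinarith

set_option maxHeartbeats 2000000 in
/-- Comparison of the norm-distance moduli of continuity of the outer unit normal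
functions of a convex body `K` (with `B(c,r) ⊆ K ⊆ B(c,R)`) and of its section
`K₀ = K ∩ P` by a two-dimensional affine plane `P = c + V`:
`ω̄(ν, τ) ≤ (2R/r)·ω̄(n, τ)` for every `τ > 0`. -/
theorem section_modulus_le_space_modulus
    {H : Type*} [NormedAddCommGroup H] [InnerProductSpace ℝ H] [CompleteSpace H]
    (K : Set H) (hKconv : Convex ℝ K) (hKcl : IsClosed K)
    (hKbd : Bornology.IsBounded K) (hKint : (interior K).Nonempty)
    (c : H) (r R : ℝ) (hr : 0 < r) (hrR : r < R)
    (hball : Metric.closedBall c r ⊆ K) (hBall : K ⊆ Metric.closedBall c R)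
    (V : Submodule ℝ H) (hVcl : IsClosed (V : Set H))
    (hV2 : Module.finrank ℝ V = 2)
    (P : Set H) (hP : P = {z : H | z - c ∈ V})
    (K₀ : Set H) (hK₀ : K₀ = K ∩ P)
    (n : H → Set H)
    (hn : ∀ x : H, n x = {u : H | ‖u‖ = 1 ∧ ∀ y ∈ K, (inner ℝ u (y - x) : ℝ) ≤ 0})
    (ν : H → Set H)
    (hν : ∀ x : H, ν x = {w : H | w ∈ V ∧ ‖w‖ = 1 ∧ ∀ y ∈ K₀, (inner ℝ w (y - x) : ℝ) ≤ 0})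
    (τ : ℝ) (hτ : 0 < τ) :
    sSup {e : ℝ≥0∞ | ∃ x ∈ frontier K ∩ P, ∃ y ∈ frontier K ∩ P,
        ∃ w ∈ ν x, ∃ z ∈ ν y, dist x y ≤ τ ∧ e = edist w z}
      ≤ ENNReal.ofReal (2 * R / r) *
        sSup {e : ℝ≥0∞ | ∃ x ∈ frontier K, ∃ y ∈ frontier K,
          ∃ u ∈ n x, ∃ v ∈ n y, dist x y ≤ τ ∧ e = edist u v} := by
  have hR : 0 < R := hr.trans hrR
  haveI : CompleteSpace V := hVcl.completeSpace_coe
  have hPinorm : ∀ h : H, ‖(V.orthogonalProjectionOnto h : H)‖ ≤ ‖h‖ := by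
    intro h
    have := (V.orthogonalProjectionOnto).le_of_opNorm_le (Submodule.orthogonalProjectionOnto_norm_le V) h
    simpa using this
  have hcint : c ∈ interior K := by
    have hsub : Metric.ball c r ⊆ interior K :=
      interior_maximal (Metric.ball_subset_closedBall.trans hball) Metric.isOpen_ball
    exact hsub (Metric.mem_ball_self hr)
  have key : ∀ x ∈ frontier K, x ∈ P → ∀ w ∈ ν x,
      ∃ u ∈ n x, (V.orthogonalProjectionOnto u : H) = ‖(V.orthogonalProjectionOnto u : H)‖ • w ∧
        r / R ≤ ‖(V.orthogonalProjectionOnto u : H)‖ := by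
    intro x hxF hxP w hw
    rw [hν] at hw
    obtain ⟨hwV, hw1, hwsupp⟩ := hw
    have hxK : x ∈ K := hKcl.frontier_subset hxF
    have hxc : x - c ∈ V := by rw [hP] at hxP; exact hxP
    set B : Set H := {y | y - x ∈ V ∧ 0 ≤ (inner ℝ w (y - x) : ℝ)} with hB
    have hBconv : Convex ℝ B := by
      rintro y₁ ⟨h₁V, h₁w⟩ y₂ ⟨h₂V, h₂w⟩ s t hs ht hst
      have hcomb : s • y₁ + t • y₂ - x = s • (y₁ - x) + t • (y₂ - x) := by
        have hx1 : x = s • x + t • x := by rw [← add_smul, hst, one_smul]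
        nth_rewrite 1 [hx1]
        rw [smul_sub, smul_sub]; abel
      constructor
      · show s • y₁ + t • y₂ - x ∈ V
        rw [hcomb]
        exact V.add_mem (V.smul_mem _ h₁V) (V.smul_mem _ h₂V)
      · show 0 ≤ (inner ℝ w (s • y₁ + t • y₂ - x) : ℝ)
        rw [hcomb, inner_add_right, real_inner_smul_right, real_inner_smul_right]
        exact add_nonneg (mul_nonneg hs h₁w) (mul_nonneg ht h₂w)
    have hdisj : Disjoint (interior K) B := by
      rw [Set.disjoint_left]
      rintro y hyint ⟨hyV, hyw⟩
      rcases Metric.isOpen_iff.1 isOpen_interior y hyint with ⟨ε, hε, hballε⟩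
      have hy' : y + (ε/2) • w ∈ K := by
        refine interior_subset (hballε ?_)
        have hd : dist (y + (ε/2) • w) y = ε/2 := by
          rw [dist_eq_norm, add_sub_cancel_left, norm_smul, hw1, Real.norm_eq_abs,
            abs_of_pos (by positivity), mul_one]
        rw [Metric.mem_ball, hd]; linarith
      have hy'P : y + (ε/2) • w ∈ P := by
        rw [hP]
        show y + (ε/2) • w - c ∈ V
        have heq : y + (ε/2) • w - c = (y - x) + (x - c) + (ε/2) • w := by abel
        rw [heq]
        exact V.add_mem (V.add_mem hyV hxc) (V.smul_mem _ hwV)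
      have hle := hwsupp _ (by rw [hK₀]; exact ⟨hy', hy'P⟩)
      have hcalc : (inner ℝ w (y + (ε/2) • w - x) : ℝ) = (inner ℝ w (y - x) : ℝ) + ε/2 := by
        have heq : y + (ε/2) • w - x = (y - x) + (ε/2) • w := by abel
        rw [heq, inner_add_right, real_inner_smul_right, real_inner_self_eq_norm_mul_norm, hw1]
        ring
      rw [hcalc] at hle
      linarith
    obtain ⟨f, α, hfK, hfB⟩ :=
      geometric_hahn_banach_open hKconv.interior isOpen_interior hBconv hdisj
    have hxB : x ∈ B := ⟨by simp, by simp⟩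
    have hKle : ∀ y ∈ K, f y ≤ α := by
      intro y hyK
      have hseq : ∀ m : ℕ, f y + (1/(m+1 : ℝ)) * (f c - f y) < α := by
        intro m
        have ht : (1/(m+1:ℝ)) ∈ Set.Ioc (0:ℝ) 1 :=
          ⟨by positivity, by
            rw [div_le_one (by positivity)]
            have : (0:ℝ) ≤ (m:ℝ) := Nat.cast_nonneg m
            linarith⟩
        have hmem := hKconv.add_smul_sub_mem_interior hyK hcint ht
        have := hfK _ hmem
        have heq : f (y + (1/(m+1:ℝ)) • (c - y)) = f y + (1/(m+1:ℝ)) * (f c - f y) := by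
          rw [map_add, map_smul, map_sub]; simp [smul_eq_mul]
        rwa [heq] at this
      have hlim : Filter.Tendsto (fun m : ℕ => f y + (1/(m+1:ℝ)) * (f c - f y))
          Filter.atTop (nhds (f y)) := by
        have h0 : Filter.Tendsto (fun m : ℕ => (1/(m+1:ℝ))) Filter.atTop (nhds 0) :=
          tendsto_one_div_add_atTop_nhds_zero_nat
        have := (h0.mul_const (f c - f y)).const_add (f y)
        simpa using this
      exact le_of_tendsto hlim (Filter.Eventually.of_forall fun m => (hseq m).le)
    have hfx : f x = α := le_antisymm (hKle x hxK) (hfB x hxB)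
    set u₀ : H := (InnerProductSpace.toDual ℝ H).symm f with hu₀def
    have hu₀ : ∀ y : H, (inner ℝ u₀ y : ℝ) = f y := fun y =>
      InnerProductSpace.toDual_symm_apply
    have hu₀ne : u₀ ≠ 0 := by
      intro h0
      have h1 := hu₀ c
      rw [h0, inner_zero_left] at h1
      have h2 := hfK c hcint
      rw [← h1] at h2
      rw [← hfx] at h2
      have h3 := hu₀ x
      rw [h0, inner_zero_left] at h3
      linarith [h3 ▸ h2]
    have hu₀K : ∀ y ∈ K, (inner ℝ u₀ (y - x) : ℝ) ≤ 0 := by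
      intro y hy
      rw [hu₀, map_sub]
      linarith [hKle y hy, hfx.ge]
    have hu₀V : ∀ p ∈ V, 0 ≤ (inner ℝ w p : ℝ) → 0 ≤ (inner ℝ u₀ p : ℝ) := by
      intro p hp hwp
      have hxp : x + p ∈ B := ⟨by simpa using hp, by simpa using hwp⟩
      have h1 := hfB _ hxp
      have h2 : f (x + p) = f x + f p := map_add f x p
      rw [hu₀]
      linarith [hfx.le]
    have hu0pos : 0 < ‖u₀‖ := norm_pos_iff.2 hu₀ne
    set u : H := ‖u₀‖⁻¹ • u₀ with hudef
    have hu1 : ‖u‖ = 1 := by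
      rw [hudef, norm_smul, Real.norm_eq_abs, abs_of_pos (inv_pos.2 hu0pos),
        inv_mul_cancel₀ hu0pos.ne']
    have huK : ∀ y ∈ K, (inner ℝ u (y - x) : ℝ) ≤ 0 := by
      intro y hy
      rw [hudef, real_inner_smul_left]
      exact mul_nonpos_iff.2 (Or.inl ⟨inv_nonneg.2 (norm_nonneg _), hu₀K y hy⟩)
    have hun : u ∈ n x := by rw [hn]; exact ⟨hu1, huK⟩
    set a : H := (V.orthogonalProjectionOnto u : H) with hadef
    have haV : a ∈ V := (V.orthogonalProjectionOnto u).2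
    have hua : ∀ p ∈ V, (inner ℝ u p : ℝ) = (inner ℝ a p : ℝ) := by
      intro p hp
      have h0 : (inner ℝ (u - a) p : ℝ) = 0 := V.starProjection_inner_eq_zero u p hp
      rw [inner_sub_left] at h0
      linarith [h0]
    have haP : ∀ p ∈ V, 0 ≤ (inner ℝ w p : ℝ) → 0 ≤ (inner ℝ a p : ℝ) := by
      intro p hp hwp
      rw [← hua p hp, hudef, real_inner_smul_left]
      exact mul_nonneg (inv_nonneg.2 (norm_nonneg _)) (hu₀V p hp hwp)
    have hww : (inner ℝ w w : ℝ) = 1 := by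
      rw [real_inner_self_eq_norm_mul_norm, hw1]; norm_num
    have haw0 : 0 ≤ (inner ℝ a w : ℝ) := haP w hwV (by rw [hww]; norm_num)
    have hp₀ : (inner ℝ a (a - (inner ℝ a w : ℝ) • w) : ℝ) = 0 := by
      have hmem : a - (inner ℝ a w : ℝ) • w ∈ V := V.sub_mem haV (V.smul_mem _ hwV)
      have hw0 : (inner ℝ w (a - (inner ℝ a w : ℝ) • w) : ℝ) = 0 := by
        rw [inner_sub_right, real_inner_smul_right, hww, real_inner_comm]; ring
      have h1 := haP _ hmem (le_of_eq hw0.symm)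
      have h2 := haP _ (V.neg_mem hmem) (by rw [inner_neg_right, hw0]; norm_num)
      rw [inner_neg_right] at h2
      linarith
    have hnormaw : ‖a‖ = (inner ℝ a w : ℝ) := by
      have h1 : (inner ℝ a a : ℝ) = (inner ℝ a w : ℝ) * (inner ℝ a w : ℝ) := by
        have := hp₀
        rw [inner_sub_right, real_inner_smul_right] at this
        linarith
      have hna : ‖a‖ * ‖a‖ = (inner ℝ a w : ℝ) * (inner ℝ a w : ℝ) := by
        rw [← real_inner_self_eq_norm_mul_norm]; exact h1
      nlinarith [norm_nonneg a, haw0]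
    have haw : a = ‖a‖ • w := by
      have hz0 : ‖a - ‖a‖ • w‖ * ‖a - ‖a‖ • w‖ = 0 := by
        rw [← real_inner_self_eq_norm_mul_norm, real_inner_sub_sub_self,
          real_inner_smul_right, real_inner_smul_left, real_inner_smul_right,
          real_inner_self_eq_norm_mul_norm a, hww, ← hnormaw]
        ring
      have := norm_eq_zero.1 (by nlinarith [norm_nonneg (a - ‖a‖ • w)] : ‖a - ‖a‖ • w‖ = 0)
      exact sub_eq_zero.1 this
    have hlow : r / R ≤ ‖a‖ := by
      have hyK : c + r • u ∈ K := by
        have hd : dist (c + r • u) c = r := by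
          rw [dist_eq_norm, add_sub_cancel_left, norm_smul, hu1, Real.norm_eq_abs,
            abs_of_pos hr, mul_one]
        exact hball (by rw [Metric.mem_closedBall, hd])
      have h1 := huK _ hyK
      have heq : c + r • u - x = (c - x) + r • u := by abel
      rw [heq, inner_add_right, real_inner_smul_right, real_inner_self_eq_norm_mul_norm,
        hu1] at h1
      have h2 : r ≤ (inner ℝ u (x - c) : ℝ) := by
        have hneg : (inner ℝ u (x - c) : ℝ) = -(inner ℝ u (c - x) : ℝ) := by
          rw [← inner_neg_right]; congr 1; abel
        rw [hneg]; nlinarith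
      have h3 : (inner ℝ u (x - c) : ℝ) = (inner ℝ a (x - c) : ℝ) := hua _ hxc
      have h4 : (inner ℝ a (x - c) : ℝ) ≤ ‖a‖ * ‖x - c‖ := real_inner_le_norm a (x - c)
      have h5 : ‖x - c‖ ≤ R := by
        have := hBall hxK
        rwa [Metric.mem_closedBall, dist_eq_norm] at this
      have h6 : ‖a‖ * ‖x - c‖ ≤ ‖a‖ * R := mul_le_mul_of_nonneg_left h5 (norm_nonneg a)
      rw [div_le_iff₀ hR]
      linarith
    exact ⟨u, hun, haw, hlow⟩
  refine sSup_le ?_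
  rintro e ⟨x, ⟨hxF, hxP⟩, y, ⟨hyF, hyP⟩, w, hw, z, hz, hxy, rfl⟩
  obtain ⟨u, hun, hau, hla⟩ := key x hxF hxP w hw
  obtain ⟨v, hvn, hbv, hlb⟩ := key y hyF hyP z hz
  set a : H := (V.orthogonalProjectionOnto u : H) with hadef
  set b : H := (V.orthogonalProjectionOnto v : H) with hbdef
  have hrR0 : (0:ℝ) < r / R := div_pos hr hR
  have ha0 : (0:ℝ) < ‖a‖ := lt_of_lt_of_le hrR0 hla
  have hb0 : (0:ℝ) < ‖b‖ := lt_of_lt_of_le hrR0 hlb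
  have hw' : w = ‖a‖⁻¹ • a := by
    nth_rewrite 2 [hau]
    rw [smul_smul, inv_mul_cancel₀ ha0.ne', one_smul]
  have hz' : z = ‖b‖⁻¹ • b := by
    nth_rewrite 2 [hbv]
    rw [smul_smul, inv_mul_cancel₀ hb0.ne', one_smul]
  have hwz : ‖w - z‖ ≤ 2 * R / r * ‖u - v‖ := by
    rw [hw', hz']
    have h1 := aux_normalize hrR0 hla hlb
    have h2 : ‖a - b‖ ≤ ‖u - v‖ := by
      have heq : a - b = (V.orthogonalProjectionOnto (u - v) : H) := by
        rw [map_sub, Submodule.coe_sub]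
      rw [heq]; exact hPinorm _
    have h3 : (2 / (r / R)) = 2 * R / r := by field_simp
    calc ‖‖a‖⁻¹ • a - ‖b‖⁻¹ • b‖ ≤ 2 / (r / R) * ‖a - b‖ := h1
      _ = 2 * R / r * ‖a - b‖ := by rw [h3]
      _ ≤ 2 * R / r * ‖u - v‖ := mul_le_mul_of_nonneg_left h2 (by positivity)
  have hmem : edist u v ∈ {e : ℝ≥0∞ | ∃ x ∈ frontier K, ∃ y ∈ frontier K,
      ∃ u ∈ n x, ∃ v ∈ n y, dist x y ≤ τ ∧ e = edist u v} :=
    ⟨x, hxF, y, hyF, u, hun, v, hvn, hxy, rfl⟩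
  calc edist w z = ENNReal.ofReal ‖w - z‖ := by
        rw [edist_eq_enorm_sub, ofReal_norm]
    _ ≤ ENNReal.ofReal (2 * R / r * ‖u - v‖) := ENNReal.ofReal_le_ofReal hwz
    _ = ENNReal.ofReal (2 * R / r) * ENNReal.ofReal ‖u - v‖ :=
        ENNReal.ofReal_mul (by positivity)
    _ = ENNReal.ofReal (2 * R / r) * edist u v := by
        rw [edist_eq_enorm_sub, ofReal_norm]
    _ ≤ _ := _root_.mul_le_mul_right (le_sSup hmem) _
end
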